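/- Let E be a real inner product space, f : E → ℝ a differentiable function whose gradient g : E → E (so that g(x) is the gradient of f at x for every x) is Lipschitz continuous with constant θ > 0. Let w, d ∈ E, ε > 0, and suppose ‖d − g(w)‖ ≤ ‖g(w)‖ − ε. Then for any step size η with 0 < η ≤ 1/θ, the update w⁺ = w − η·d satisfies f(w⁺) ≤ f(w) − (η/2)·(‖g(w)‖² − ‖d − g(w)‖²) ≤ f(w) − (η/2)·ε². (This is the deterministic single-step guarantee of Lemma 4: gradient steps computed from the sampled graph decrease the loss on the manifold as long as the graph gradient approximates the manifold gradient to within ‖g(w)‖ − ε.) -/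

import Mathlib

open intervalIntegral in
/-- Descent lemma: quadratic upper bound for a function with Lipschitz gradient. -/
theorem descent_lemma {E : Type*} [NormedAddCommGroup E] [InnerProductSpace ℝ E]
    [CompleteSpace E] (f : E → ℝ) (g : E → E) (θ : ℝ) (hθ : 0 ≤ θ)
    (hgrad : ∀ x, HasGradientAt f (g x) x)
    (hLip : LipschitzWith θ.toNNReal g) (x v : E) :
    f (x + v) ≤ f x + inner ℝ (g x) v + θ / 2 * ‖v‖ ^ 2 := by
  set φ : ℝ → ℝ := fun t => f (x + t • v) with hφdef
  have hline : ∀ t : ℝ, HasDerivAt (fun s : ℝ => x + s • v) v t := by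
    intro t
    simpa using ((hasDerivAt_id t).smul_const v).const_add x
  have hφ : ∀ t : ℝ, HasDerivAt φ (inner ℝ (g (x + t • v)) v) t := by
    intro t
    have h1 : HasFDerivAt f (InnerProductSpace.toDual ℝ E (g (x + t • v))) (x + t • v) :=
      (hgrad _).hasFDerivAt
    simpa [hφdef, Function.comp_def] using h1.comp_hasDerivAt t (hline t)
  have hgcont : Continuous g := hLip.continuous
  have hcont : Continuous fun t : ℝ => (inner ℝ (g (x + t • v)) v : ℝ) := by
    exact (hgcont.comp (continuous_const.add (continuous_id.smul continuous_const))).inner continuous_const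
  have hFTC : φ 1 - φ 0 = ∫ t in (0:ℝ)..1, inner ℝ (g (x + t • v)) v := by
    rw [intervalIntegral.integral_eq_sub_of_hasDerivAt (fun t _ => hφ t)
      (hcont.intervalIntegrable 0 1)]
  have hbound : ∀ t ∈ Set.Icc (0:ℝ) 1,
      (inner ℝ (g (x + t • v)) v : ℝ) ≤ inner ℝ (g x) v + θ * t * ‖v‖ ^ 2 := by
    intro t ht
    have h1 : (inner ℝ (g (x + t • v)) v : ℝ) = inner ℝ (g x) v + inner ℝ (g (x + t • v) - g x) v := by
      rw [inner_sub_left]; ring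
    have h2 : (inner ℝ (g (x + t • v) - g x) v : ℝ) ≤ ‖g (x + t • v) - g x‖ * ‖v‖ :=
      real_inner_le_norm _ _
    have h3 : ‖g (x + t • v) - g x‖ ≤ θ * (t * ‖v‖) := by
      have h := hLip.dist_le_mul (x + t • v) x
      simp only [dist_eq_norm, add_sub_cancel_left, norm_smul, Real.norm_eq_abs,
        abs_of_nonneg ht.1, Real.coe_toNNReal θ hθ] at h
      linarith [h]
    nlinarith [norm_nonneg v, mul_le_mul_of_nonneg_right h3 (norm_nonneg v)]
  have hmono : (∫ t in (0:ℝ)..1, inner ℝ (g (x + t • v)) v) ≤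
      ∫ t in (0:ℝ)..1, (inner ℝ (g x) v + θ * t * ‖v‖ ^ 2) := by
    apply intervalIntegral.integral_mono_on (by norm_num)
      (hcont.intervalIntegrable 0 1)
      ((by continuity : Continuous fun t : ℝ =>
        (inner ℝ (g x) v : ℝ) + θ * t * ‖v‖ ^ 2).intervalIntegrable 0 1)
    exact hbound
  have hval : (∫ t in (0:ℝ)..1, (inner ℝ (g x) v + θ * t * ‖v‖ ^ 2)) =
      inner ℝ (g x) v + θ / 2 * ‖v‖ ^ 2 := by
    rw [intervalIntegral.integral_add (intervalIntegrable_const)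
      (by apply Continuous.intervalIntegrable; continuity)]
    simp only [intervalIntegral.integral_const, smul_eq_mul]
    have : (∫ t in (0:ℝ)..1, θ * t * ‖v‖ ^ 2) = θ * ‖v‖ ^ 2 * ∫ t in (0:ℝ)..1, t := by
      rw [← intervalIntegral.integral_const_mul]
      congr 1; ext t; ring
    rw [this, integral_id]
    ring
  have hφ0 : φ 0 = f x := by simp [hφdef]
  have hφ1 : φ 1 = f (x + v) := by simp [hφdef]
  rw [hφ0, hφ1] at hFTC
  linarith [hmono.trans_eq hval, hFTC]

/-- Deterministic single-step guarantee of Lemma 4: graph-computed gradient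
steps decrease the manifold loss as long as the surrogate gradient d
approximates the true gradient g(w) to within ‖g(w)‖ − ε. -/
theorem stmt_11 {E : Type*} [NormedAddCommGroup E] [InnerProductSpace ℝ E]
    [CompleteSpace E] (f : E → ℝ) (g : E → E) (θ : ℝ) (hθ : 0 < θ)
    (hgrad : ∀ x, HasGradientAt f (g x) x)
    (hLip : LipschitzWith θ.toNNReal g)
    (w d : E) (ε : ℝ) (hε : 0 < ε)
    (happrox : ‖d - g w‖ ≤ ‖g w‖ - ε)
    (η : ℝ) (hη : 0 < η) (hηθ : η ≤ 1 / θ) :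
    f (w - η • d) ≤ f w - η / 2 * (‖g w‖ ^ 2 - ‖d - g w‖ ^ 2) ∧
      f w - η / 2 * (‖g w‖ ^ 2 - ‖d - g w‖ ^ 2) ≤ f w - η / 2 * ε ^ 2 := by
  have hdesc := descent_lemma f g θ hθ.le hgrad hLip w (-(η • d))
  have hrw : w + -(η • d) = w - η • d := by abel
  rw [hrw] at hdesc
  have hinner : (inner ℝ (g w) (-(η • d)) : ℝ) = -(η * inner ℝ (g w) d) := by
    rw [inner_neg_right, real_inner_smul_right]
  have hnorm : ‖-(η • d)‖ ^ 2 = η ^ 2 * ‖d‖ ^ 2 := by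
    rw [norm_neg, norm_smul, Real.norm_eq_abs, mul_pow, sq_abs]
  rw [hinner, hnorm] at hdesc
  have hid : ‖d - g w‖ ^ 2 = ‖d‖ ^ 2 - 2 * inner ℝ (d : E) (g w) + ‖g w‖ ^ 2 := by
    rw [← real_inner_self_eq_norm_sq, ← real_inner_self_eq_norm_sq,
      ← real_inner_self_eq_norm_sq, inner_sub_sub_self, real_inner_comm (g w) d]
    ring
  have hsym : (inner ℝ (g w) d : ℝ) = inner ℝ (d : E) (g w) := real_inner_comm _ _
  have hθη : θ * η ≤ 1 := by
    rw [le_div_iff₀ hθ] at hηθ; linarith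
  have hdg : 0 ≤ ‖d - g w‖ := norm_nonneg _
  constructor
  · -- θ/2 * (η² ‖d‖²) ≤ η/2 * ‖d‖² since θη ≤ 1
    have hq : θ / 2 * (η ^ 2 * ‖d‖ ^ 2) ≤ η / 2 * ‖d‖ ^ 2 := by
      nlinarith [sq_nonneg ‖d‖, hθη, hη, mul_nonneg (mul_nonneg hη.le hη.le) (sq_nonneg ‖d‖)]
    nlinarith [hdesc]
  · have : ε ^ 2 ≤ ‖g w‖ ^ 2 - ‖d - g w‖ ^ 2 := by nlinarith
    nlinarith
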